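/- For every integer n ≥ 1 there exist rational numbers α_1, …, α_n such that for every integer k ≥ 0 one has A(n,k) = ∑_{l=1}^{n} α_l · k^l; that is, the function k ↦ A(n,k) agrees on the nonnegative integers with a polynomial of degree at most n having zero constant term. -/

import Mathlib

/-- `A(n,k) := (2·(2n)!/(2n+k)!) · ∑_{j=0}^{⌊k/2⌋} (−1)^j · C(k,j) · (k/2 − j)^{k+2n}` in `ℚ`. -/
def A (n k : ℕ) : ℚ :=
  (2 * (Nat.factorial (2 * n) : ℚ) / (Nat.factorial (2 * n + k) : ℚ)) *
    ∑ j ∈ Finset.range (k / 2 + 1),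
      (-1 : ℚ) ^ j * (Nat.choose k j : ℚ) * ((k : ℚ) / 2 - (j : ℚ)) ^ (k + 2 * n)

open PowerSeries Finset


noncomputable section

/-- exp(aX) -/
abbrev E (a : ℚ) : ℚ⟦X⟧ := rescale a (PowerSeries.exp ℚ)

lemma coeff_E (a : ℚ) (m : ℕ) : coeff m (E a) = a ^ m / m.factorial := by
  simp [coeff_rescale, div_eq_mul_inv]

lemma E_pow (a : ℚ) (j : ℕ) : (E a) ^ j = E ((j : ℚ) * a) := by
  induction j with
  | zero => simp [E, rescale_zero]
  | succ j ih =>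
      rw [pow_succ, ih, E, E, E, exp_mul_exp_eq_exp_add]
      push_cast; ring_nf

/-- the series (e^{x/2}-e^{-x/2})/x -/
def Fs : ℚ⟦X⟧ := PowerSeries.mk fun m => if Even m then (1/2 : ℚ) ^ m / (m+1).factorial else 0

lemma X_mul_Fs : (X : ℚ⟦X⟧) * Fs = E (1/2) - E (-(1/2)) := by
  ext m
  cases m with
  | zero => simp [Fs, coeff_E, map_sub]
  | succ m =>
      rw [coeff_succ_X_mul, map_sub, coeff_E, coeff_E, Fs, coeff_mk]
      rcases Nat.even_or_odd m with he | ho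
      · rw [if_pos he]
        have : (-(1/2) : ℚ) ^ (m+1) = -((1/2:ℚ)^(m+1)) := by
          rw [neg_pow]
          rcases he with ⟨t, ht⟩
          have : (-1:ℚ)^(m+1) = -1 := by
            have : m + 1 = 2*t + 1 := by omega
            rw [this, pow_succ, pow_mul]; norm_num
          rw [this]; ring
        rw [this]
        have h2 : (1/2:ℚ)^(m+1) = (1/2:ℚ)^m * (1/2) := by ring
        field_simp
        ring
      · rw [if_neg (Nat.not_even_iff_odd.mpr ho)]
        have : (-(1/2) : ℚ) ^ (m+1) = (1/2:ℚ)^(m+1) := by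
          rw [neg_pow]
          rcases ho with ⟨t, ht⟩
          have h1 : (-1:ℚ)^(m+1) = 1 := by
            have : m + 1 = 2*(t+1) := by omega
            rw [this, pow_mul]; norm_num
          rw [h1, one_mul]
        rw [this]; ring

lemma Dk (k : ℕ) : (E (1/2) - E (-(1/2))) ^ k
    = ∑ j ∈ range (k+1), ((-1:ℚ)^j * (k.choose j : ℚ)) • E ((k : ℚ)/2 - j) := by
  rw [sub_eq_add_neg, add_comm, add_pow]
  refine Finset.sum_congr rfl fun j hj => ?_
  have hj' : j ≤ k := Finset.mem_range_succ_iff.mp hj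
  rw [neg_pow, E_pow, E_pow, smul_eq_C_mul]
  have hcast : ((k - j : ℕ) : ℚ) = (k : ℚ) - j := by
    push_cast [Nat.cast_sub hj']; ring
  have hmul : E ((j:ℚ) * -(1/2)) * E (((k - j : ℕ) : ℚ) * (1/2)) = E ((k:ℚ)/2 - j) := by
    rw [E, E, E, exp_mul_exp_eq_exp_add]
    congr 1
    rw [hcast]; ring
  calc ((-1:ℚ⟦X⟧))^j * E ((j:ℚ) * -(1/2)) * E (((k - j : ℕ) : ℚ) * (1/2)) * (k.choose j : ℚ⟦X⟧)
      = ((-1:ℚ⟦X⟧))^j * (k.choose j : ℚ⟦X⟧) * (E ((j:ℚ) * -(1/2)) * E (((k - j : ℕ) : ℚ) * (1/2))) := by ring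
    _ = C ((-1)^j * (k.choose j : ℚ)) * E ((k:ℚ)/2 - j) := by
        rw [hmul, map_mul, map_pow, map_neg, map_one, map_natCast]

lemma key1 (n k : ℕ) :
    ∑ j ∈ range (k+1), (-1:ℚ)^j * (k.choose j : ℚ) * ((k:ℚ)/2 - j) ^ (k + 2*n)
      = ((k + 2*n).factorial : ℚ) * coeff (2*n) (Fs ^ k) := by
  have h1 : coeff (k + 2*n) (((X : ℚ⟦X⟧) * Fs) ^ k) = coeff (2*n) (Fs ^ k) := by
    rw [mul_pow, show k + 2*n = 2*n + k by omega, coeff_X_pow_mul]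
  rw [← h1, X_mul_Fs, Dk, map_sum, Finset.mul_sum]
  refine Finset.sum_congr rfl fun j hj => ?_
  rw [coeff_smul, coeff_E, smul_eq_mul]
  have hf : ((k + 2*n).factorial : ℚ) ≠ 0 := Nat.cast_ne_zero.mpr (Nat.factorial_ne_zero _)
  field_simp

lemma half_sum (n k : ℕ) (hn : 1 ≤ n) :
    ∑ j ∈ range (k+1), (-1:ℚ)^j * (k.choose j : ℚ) * ((k:ℚ)/2 - j) ^ (k + 2*n)
      = 2 * ∑ j ∈ range (k/2+1), (-1:ℚ)^j * (k.choose j : ℚ) * ((k:ℚ)/2 - j) ^ (k + 2*n) := by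
  set g : ℕ → ℚ := fun j => (-1:ℚ)^j * (k.choose j : ℚ) * ((k:ℚ)/2 - j) ^ (k + 2*n) with hg
  have hsym : ∀ j ≤ k, g (k - j) = g j := by
    intro j hj
    simp only [hg]
    rw [Nat.choose_symm hj, Nat.cast_sub hj]
    have h1 : ((k:ℚ)/2 - ((k:ℚ) - j)) = -((k:ℚ)/2 - j) := by ring
    rw [h1, neg_pow ((k:ℚ)/2 - (j:ℚ))]
    have h2 : (-1:ℚ)^(k-j) * (-1:ℚ)^j = (-1:ℚ)^k := by
      rw [← pow_add]; congr 1; omega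
    have h3 : (-1:ℚ)^(k + 2*n) = (-1:ℚ)^k := by
      rw [pow_add, pow_mul]; norm_num
    rw [h3]
    have h4 : (-1:ℚ)^(k-j) = (-1:ℚ)^k * (-1:ℚ)^j := by
      have := h2
      have hj2 : ((-1:ℚ)^j) * ((-1:ℚ)^j) = 1 := by
        rw [← pow_add, ← two_mul, pow_mul]; norm_num
      calc (-1:ℚ)^(k-j) = (-1:ℚ)^(k-j) * (((-1:ℚ)^j) * ((-1:ℚ)^j)) := by rw [hj2]; ring
        _ = ((-1:ℚ)^(k-j) * (-1:ℚ)^j) * (-1:ℚ)^j := by ring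
        _ = (-1:ℚ)^k * (-1:ℚ)^j := by rw [h2]
    rw [h4]
    have hk2 : (-1:ℚ)^k * (-1:ℚ)^k = 1 := by
      rw [← pow_add, ← two_mul, pow_mul]; norm_num
    calc (-1:ℚ)^k * (-1:ℚ)^j * (k.choose j : ℚ) * ((-1:ℚ)^k * ((k:ℚ)/2 - j)^(k+2*n))
        = ((-1:ℚ)^k * (-1:ℚ)^k) * ((-1:ℚ)^j * (k.choose j : ℚ) * ((k:ℚ)/2 - j)^(k+2*n)) := by ring
      _ = g j := by rw [hk2, hg]; ring
  have hsplit : ∑ j ∈ range (k+1), g j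
      = (∑ j ∈ range (k/2+1), g j) + ∑ j ∈ Ico (k/2+1) (k+1), g j := by
    rw [Finset.range_eq_Ico, ← Finset.sum_Ico_consecutive _ (by omega : 0 ≤ k/2+1) (by omega : k/2+1 ≤ k+1), Finset.range_eq_Ico]
  have hre : ∑ j ∈ Ico (k/2+1) (k+1), g j = ∑ i ∈ range (k - k/2), g i := by
    rw [Finset.range_eq_Ico]
    refine Finset.sum_nbij' (fun j => k - j) (fun i => k - i) ?_ ?_ ?_ ?_ ?_
    · intro a ha; simp only [Finset.mem_Ico] at *; omega
    · intro a ha; simp only [Finset.mem_Ico] at *; omega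
    · intro a ha; simp only [Finset.mem_Ico] at ha; show k - (k - a) = a; omega
    · intro a ha; simp only [Finset.mem_Ico] at ha; show k - (k - a) = a; omega
    · intro a ha; simp only [Finset.mem_Ico] at ha
      exact (hsym a (by omega)).symm
  rw [hsplit, hre]
  rcases Nat.even_or_odd k with ⟨m, hm⟩ | ⟨m, hm⟩
  · have h1 : k - k/2 = k/2 := by omega
    have h2 : ∑ j ∈ range (k/2+1), g j = (∑ j ∈ range (k/2), g j) + g (k/2) := by
      rw [Finset.sum_range_succ]
    have h0 : g (k/2) = 0 := by
      simp only [hg]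
      have hk : (k:ℚ) = 2 * ((k/2 : ℕ) : ℚ) := by
        have h : k = 2 * (k/2) := by omega
        calc (k:ℚ) = ((2*(k/2) : ℕ) : ℚ) := by rw [← h]
          _ = 2 * ((k/2:ℕ):ℚ) := by push_cast; ring
      have hz : ((k:ℚ)/2 - ((k/2 : ℕ) : ℚ)) = 0 := by rw [hk]; ring
      rw [hz, zero_pow (by omega)]
      ring
    rw [h1, h2, h0]
    ring
  · have h1 : k - k/2 = k/2 + 1 := by omega
    rw [h1]
    ring

def Hs : ℚ⟦X⟧ := PowerSeries.mk fun m => if Even m then (1/2 : ℚ) ^ (m+2) / (m+3).factorial else 0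

lemma Fs_eq : Fs = 1 + X^2 * Hs := by
  ext m
  rw [map_add, coeff_X_pow_mul' Hs 2 m]
  match m with
  | 0 => simp [Fs, coeff_one]
  | 1 => simp [Fs, coeff_one, Nat.not_even_iff_odd.mpr ⟨0, rfl⟩]
  | (m+2) =>
      rw [if_pos (by omega : 2 ≤ m + 2)]
      have hpar : Even (m+2) ↔ Even m := by rw [Nat.even_iff, Nat.even_iff]; omega
      simp only [Fs, Hs, coeff_mk, coeff_one, hpar, if_neg (by omega : ¬ m + 2 = 0),
        zero_add, show m + 2 - 2 = m from rfl]

lemma key2 (n k : ℕ) (hn : 1 ≤ n) :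
    coeff (2*n) (Fs ^ k)
      = ∑ i ∈ range (n+1), (k.choose i : ℚ) * coeff (2*n) (((X:ℚ⟦X⟧)^2 * Hs) ^ i) := by
  have hvanish : ∀ i, n < i → coeff (2*n) (((X:ℚ⟦X⟧)^2 * Hs) ^ i) = 0 := by
    intro i hi
    rw [mul_pow, ← pow_mul, coeff_X_pow_mul', if_neg (by omega)]
  have hexp : coeff (2*n) (Fs ^ k)
      = ∑ i ∈ range (k+1), (k.choose i : ℚ) * coeff (2*n) (((X:ℚ⟦X⟧)^2 * Hs) ^ i) := by
    rw [Fs_eq, add_comm, add_pow, map_sum]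
    refine Finset.sum_congr rfl fun i hi => ?_
    rw [one_pow, mul_one]
    rw [show (((X:ℚ⟦X⟧)^2*Hs)^i * (k.choose i : ℚ⟦X⟧)) = (C (k.choose i : ℚ)) * ((X:ℚ⟦X⟧)^2*Hs)^i by
      rw [map_natCast]; ring]
    rw [coeff_C_mul]
  rw [hexp]
  rw [Finset.sum_subset (Finset.range_subset_range.mpr (by omega : k+1 ≤ k+n+1))
    (fun i _ hi => by
      rw [Nat.choose_eq_zero_of_lt (by simp only [Finset.mem_range] at hi; omega),
        Nat.cast_zero, zero_mul]),
    ← Finset.sum_subset (Finset.range_subset_range.mpr (by omega : n+1 ≤ k+n+1))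
    (fun i _ hi => by
      rw [hvanish i (by simp only [Finset.mem_range] at hi; omega), mul_zero])]

def cc (n i : ℕ) : ℚ := coeff (2*n) (((X:ℚ⟦X⟧)^2 * Hs) ^ i)

def P (n : ℕ) : Polynomial ℚ :=
  ∑ i ∈ range (n+1),
    Polynomial.C (((2*n).factorial : ℚ) * cc n i / i.factorial) * descPochhammer ℚ i

lemma P_eval (n k : ℕ) :
    (P n).eval (k:ℚ) = ((2*n).factorial : ℚ) * ∑ i ∈ range (n+1), (k.choose i : ℚ) * cc n i := by
  rw [P, Polynomial.eval_finset_sum, Finset.mul_sum]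
  refine Finset.sum_congr rfl fun i hi => ?_
  rw [Polynomial.eval_mul, Polynomial.eval_C, descPochhammer_eval_eq_descFactorial]
  have h1 : (k.descFactorial i : ℚ) = (i.factorial : ℚ) * (k.choose i : ℚ) := by
    exact_mod_cast congrArg (Nat.cast : ℕ → ℚ) (Nat.descFactorial_eq_factorial_mul_choose k i)
  rw [h1]
  have hf : (i.factorial : ℚ) ≠ 0 := Nat.cast_ne_zero.mpr (Nat.factorial_ne_zero _)
  field_simp

lemma A_eq_eval (n k : ℕ) (hn : 1 ≤ n) : A n k = (P n).eval (k:ℚ) := by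
  have hfull := key1 n k
  rw [half_sum n k hn] at hfull
  rw [A, P_eval]
  simp only [cc]
  rw [← key2 n k hn]
  have hfac : ((2*n+k).factorial : ℚ) = ((k+2*n).factorial : ℚ) := by rw [Nat.add_comm]
  have hne : ((k+2*n).factorial : ℚ) ≠ 0 := Nat.cast_ne_zero.mpr (Nat.factorial_ne_zero _)
  rw [hfac]
  have hhalf : ∑ j ∈ Finset.range (k / 2 + 1),
      (-1 : ℚ) ^ j * (Nat.choose k j : ℚ) * ((k : ℚ) / 2 - (j : ℚ)) ^ (k + 2 * n)
      = ((k + 2*n).factorial : ℚ) * coeff (2*n) (Fs ^ k) / 2 := by linarith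
  rw [hhalf]
  field_simp

lemma P_natDegree (n : ℕ) : (P n).natDegree ≤ n := by
  apply Polynomial.natDegree_sum_le_of_forall_le
  intro i hi
  refine le_trans (Polynomial.natDegree_C_mul_le _ _) ?_
  rw [descPochhammer_natDegree]
  exact Finset.mem_range_succ_iff.mp hi

lemma P_coeff_zero (n : ℕ) (hn : 1 ≤ n) : (P n).coeff 0 = 0 := by
  rw [Polynomial.coeff_zero_eq_eval_zero]
  have h := A_eq_eval n 0 hn
  rw [show ((0:ℕ):ℚ) = 0 from rfl] at h
  rw [← h, A]
  simp
  right
  omega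

end

/-- For every integer `n ≥ 1` there exist rationals `α_1, …, α_n` such that
for every integer `k ≥ 0`, `A(n,k) = ∑_{l=1}^{n} α_l · k^l`: the function `k ↦ A(n,k)` agrees
on the nonnegative integers with a polynomial of degree at most `n` with zero constant term. -/
theorem A_eq_polynomial (n : ℕ) (hn : 1 ≤ n) :
    ∃ α : ℕ → ℚ, ∀ k : ℕ, A n k = ∑ l ∈ Finset.Icc 1 n, α l * (k : ℚ) ^ l := by
  refine ⟨fun l => (P n).coeff l, fun k => ?_⟩
  rw [A_eq_eval n k hn,
    Polynomial.eval_eq_sum_range' (lt_of_le_of_lt (P_natDegree n) (Nat.lt_succ_self n)),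
    Finset.sum_range_succ', P_coeff_zero n hn, zero_mul, add_zero,
    ← Finset.Ico_add_one_right_eq_Icc, Finset.sum_Ico_eq_sum_range]
  simp only [Nat.add_sub_cancel]
  refine Finset.sum_congr rfl fun i _ => ?_
  rw [Nat.add_comm 1 i]
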